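/- Let G be a finite group and let X and Y be finite G-sets. Then the dimension over ℂ of the space of intertwining operators Hom_{Rep ℂ G}(ℂ[X], ℂ[Y]) between the permutation representations ℂ[X] and ℂ[Y] equals the number of G-orbits of the diagonal action of G on X × Y. -/

import Mathlib

open CategoryTheory

namespace FinrankIntertwinersAux
variable (G : Type) [Group G] (X Y : Type) [Fintype X] [Fintype Y]
  [MulAction G X] [MulAction G Y]

noncomputable def krn (f : Rep.ofMulAction ℂ G X ⟶ Rep.ofMulAction ℂ G Y) (p : X × Y) : ℂ :=
  (show MonoidAlgebra ℂ Y from f.hom (MonoidAlgebra.single p.1 (1 : ℂ))).coeff p.2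

omit [Fintype X] [Fintype Y] in
lemma krn_inv (f : Rep.ofMulAction ℂ G X ⟶ Rep.ofMulAction ℂ G Y) (g : G) (p : X × Y) :
    krn G X Y f (g • p) = krn G X Y f p := by
  rcases p with ⟨x, y⟩
  show (show MonoidAlgebra ℂ Y from f.hom (MonoidAlgebra.single (g • x) (1 : ℂ))).coeff (g • y)
      = (show MonoidAlgebra ℂ Y from f.hom (MonoidAlgebra.single x (1 : ℂ))).coeff y
  rw [← Representation.ofMulAction_single (k := ℂ) g x 1]
  rw [show ((Representation.ofMulAction ℂ G X) g) (MonoidAlgebra.single x 1)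
      = (Rep.ofMulAction ℂ G X).ρ g (MonoidAlgebra.single x 1) from rfl]
  rw [Rep.hom_comm_apply f g (MonoidAlgebra.single x 1)]
  rw [show ((Rep.ofMulAction ℂ G Y).ρ g) (f.hom (MonoidAlgebra.single x 1))
      = (Representation.ofMulAction ℂ G Y) g (f.hom (MonoidAlgebra.single x 1)) from rfl]
  rw [Representation.coeff_ofMulAction]
  simp

omit [Fintype X] [Fintype Y] in
lemma krn_mk (f : Rep.ofMulAction ℂ G X ⟶ Rep.ofMulAction ℂ G Y) (p : X × Y) :
    krn G X Y f (Quotient.mk (MulAction.orbitRel G (X × Y)) p).out = krn G X Y f p := by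
  obtain ⟨g, hg⟩ := Quotient.exact (Quotient.out_eq (Quotient.mk (MulAction.orbitRel G (X × Y)) p))
  rw [← hg, krn_inv]

/-- the comparison linear map -/
noncomputable def cmpMap :
    (Rep.ofMulAction ℂ G X ⟶ Rep.ofMulAction ℂ G Y) →ₗ[ℂ]
      (Quotient (MulAction.orbitRel G (X × Y)) → ℂ) where
  toFun f := fun q => krn G X Y f q.out
  map_add' f₁ f₂ := rfl
  map_smul' c f := by funext q; simp [krn, Rep.smul_hom]

noncomputable def kerHom (k : X × Y → ℂ) : MonoidAlgebra ℂ X →ₗ[ℂ] MonoidAlgebra ℂ Y :=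
  Finsupp.lsum ℂ (fun x => LinearMap.toSpanSingleton ℂ (MonoidAlgebra ℂ Y)
    (MonoidAlgebra.ofCoeff (Finsupp.equivFunOnFinite.symm fun y => k (x, y))))
    ∘ₗ (MonoidAlgebra.coeffLinearEquiv ℂ).toLinearMap

lemma kerHom_single (k : X × Y → ℂ) (x : X) (c : ℂ) :
    kerHom X Y k (MonoidAlgebra.single x c)
      = c • MonoidAlgebra.ofCoeff (Finsupp.equivFunOnFinite.symm fun y => k (x, y)) := by
  unfold kerHom
  simp [MonoidAlgebra.coeffLinearEquiv, MonoidAlgebra.coeff_single]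

lemma kerHom_comm (k : X × Y → ℂ)
    (hk : ∀ (g : G) (p : X × Y), k (g • p) = k p) (g : G) :
    (kerHom X Y k) ∘ₗ ((Representation.ofMulAction ℂ G X) g)
      = ((Representation.ofMulAction ℂ G Y) g) ∘ₗ (kerHom X Y k) := by
  apply MonoidAlgebra.lhom_ext'
  intro x
  apply LinearMap.ext
  intro c
  show kerHom X Y k ((Representation.ofMulAction ℂ G X) g (MonoidAlgebra.single x c))
    = (Representation.ofMulAction ℂ G Y) g (kerHom X Y k (MonoidAlgebra.single x c))
  rw [Representation.ofMulAction_single, kerHom_single, kerHom_single]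
  ext y
  rw [Representation.coeff_ofMulAction]
  simp only [MonoidAlgebra.coeff_smul, Finsupp.smul_apply,
    Finsupp.coe_equivFunOnFinite_symm]
  congr 1
  simpa using hk g (x, g⁻¹ • y)

lemma krn_ofKerHom (k : X × Y → ℂ) (hom : Rep.ofMulAction ℂ G X ⟶ Rep.ofMulAction ℂ G Y)
    (h : hom.hom.toLinearMap = kerHom X Y k) (p : X × Y) : krn G X Y hom p = k p := by
  rcases p with ⟨x, y⟩
  show (hom.hom.toLinearMap (MonoidAlgebra.single x (1 : ℂ))).coeff y = k (x, y)
  rw [h, kerHom_single]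
  simp

/-- construct a morphism from an invariant kernel -/
noncomputable def ofKer (k : X × Y → ℂ)
    (hk : ∀ (g : G) (p : X × Y), k (g • p) = k p) :
    Rep.ofMulAction ℂ G X ⟶ Rep.ofMulAction ℂ G Y :=
  Rep.ofHom ⟨kerHom X Y k, kerHom_comm G X Y k hk⟩

set_option maxHeartbeats 1000000 in
lemma cmp_bij : Function.Bijective (cmpMap G X Y) := by
  constructor
  · intro f₁ f₂ h
    have hk : ∀ p : X × Y, krn G X Y f₁ p = krn G X Y f₂ p := by
      intro p
      have := congrFun h (Quotient.mk (MulAction.orbitRel G (X × Y)) p)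
      change krn G X Y f₁ (Quotient.mk (MulAction.orbitRel G (X × Y)) p).out
        = krn G X Y f₂ (Quotient.mk (MulAction.orbitRel G (X × Y)) p).out at this
      rwa [krn_mk, krn_mk] at this
    apply Rep.hom_ext
    apply Representation.IntertwiningMap.ext
    apply MonoidAlgebra.lhom_ext'
    intro x
    apply LinearMap.ext
    intro c
    have h1 : (f₁.hom (MonoidAlgebra.single x (1 : ℂ)) : MonoidAlgebra ℂ Y)
        = f₂.hom (MonoidAlgebra.single x (1 : ℂ)) :=
      MonoidAlgebra.ext (Finsupp.ext fun y => hk (x, y))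
    have hs : (MonoidAlgebra.single x c : MonoidAlgebra ℂ X) = c • MonoidAlgebra.single x 1 := by
      rw [MonoidAlgebra.smul_single', mul_one]
    show f₁.hom (MonoidAlgebra.single x c) = f₂.hom (MonoidAlgebra.single x c)
    rw [hs, map_smul, map_smul]
    exact congrArg (fun v : MonoidAlgebra ℂ Y => c • v) h1
  · intro F
    have hF : ∀ (g : G) (p : X × Y),
        (fun p => F (Quotient.mk _ p)) (g • p) = (fun p => F (Quotient.mk _ p)) p := fun g p =>
      congrArg F (Quotient.sound (MulAction.mem_orbit p g))
    refine ⟨ofKer G X Y (fun p => F (Quotient.mk _ p)) hF, ?_⟩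
    funext q
    have h0 : cmpMap G X Y (ofKer G X Y (fun p => F (Quotient.mk _ p)) hF) q
        = krn G X Y (ofKer G X Y (fun p => F (Quotient.mk _ p)) hF) q.out := rfl
    rw [h0, krn_ofKerHom G X Y (fun p => F (Quotient.mk _ p))
      (ofKer G X Y (fun p => F (Quotient.mk _ p)) hF) rfl q.out, Quotient.out_eq]

end FinrankIntertwinersAux

/-- The dimension of the space of intertwining operators between the permutation
representations `ℂ[X]` and `ℂ[Y]` equals the number of `G`-orbits of the diagonal
action of `G` on `X × Y`. -/
theorem finrank_intertwiners_eq_card_orbits (G : Type) [Group G] [Fintype G]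
    (X Y : Type) [Fintype X] [Fintype Y] [MulAction G X] [MulAction G Y] :
    Module.finrank ℂ (Rep.ofMulAction ℂ G X ⟶ Rep.ofMulAction ℂ G Y) =
      Nat.card (Quotient (MulAction.orbitRel G (X × Y))) := by
  classical
  have e := LinearEquiv.ofBijective (FinrankIntertwinersAux.cmpMap G X Y)
    (FinrankIntertwinersAux.cmp_bij G X Y)
  have : Fintype (Quotient (MulAction.orbitRel G (X × Y))) := Fintype.ofFinite _
  rw [e.finrank_eq, Module.finrank_pi, Nat.card_eq_fintype_card]
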